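/- A set S ⊆ A is a complete extension of an argumentation framework ⟨A,R⟩ if and only if S ⊆ n(S) and S = n(n(S)), where n is the neutrality function. Hence complete extensions coincide exactly with Roth's subsolutions of the abstract game ⟨A,R⟩. -/
import Mathlib

def attacked {A : Type*} (R : A → A → Prop) (S : Set A) : Set A :=
  {b | ∃ a ∈ S, R a b}

def neutrality {A : Type*} (R : A → A → Prop) (S : Set A) : Set A :=
  (attacked R S)ᶜ

def defence {A : Type*} (R : A → A → Prop) (S : Set A) : Set A :=
  {a | ∀ b, R b a → b ∈ attacked R S}

def unattacked {A : Type*} (R : A → A → Prop) : Set A :=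
  {a | ∀ b, ¬ R b a}

def conflictFree {A : Type*} (R : A → A → Prop) (S : Set A) : Prop :=
  S ⊆ neutrality R S

def complete {A : Type*} (R : A → A → Prop) (S : Set A) : Prop :=
  conflictFree R S ∧ S ⊆ defence R S ∧ defence R S ⊆ S

def subsolution {A : Type*} (R : A → A → Prop) (S : Set A) : Prop :=
  S ⊆ neutrality R S ∧ S = neutrality R (neutrality R S)

def stableExt {A : Type*} (R : A → A → Prop) (S : Set A) : Prop :=
  S = neutrality R S

def preferred {A : Type*} (R : A → A → Prop) (S : Set A) : Prop :=
  complete R S ∧ ∀ T, complete R T → S ⊆ T → S = T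

lemma defence_eq {A : Type*} (R : A → A → Prop) (S : Set A) :
    defence R S = neutrality R (neutrality R S) := by
  ext a
  simp only [defence, neutrality, attacked, Set.mem_setOf_eq, Set.mem_compl_iff]
  push_neg
  constructor
  · intro h b hb hba
    obtain ⟨c, hc, hcb⟩ := h b hba
    exact hb c hc hcb
  · intro h b hba
    by_contra hb
    push_neg at hb
    exact h b (fun c hc hcb => hb c hc hcb) hba

/-- Complete extensions are exactly Roth's subsolutions. -/
theorem complete_iff_subsolution {A : Type*} (R : A → A → Prop) (S : Set A) :
    complete R S ↔ subsolution R S := by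
  unfold complete subsolution conflictFree
  rw [defence_eq]
  constructor
  · rintro ⟨h1, h2, h3⟩
    exact ⟨h1, Set.Subset.antisymm h2 h3⟩
  · rintro ⟨h1, h2⟩
    exact ⟨h1, h2.le, h2.ge⟩
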